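/- Let f be holomorphic on an open set containing the upper half-plane ℍ and the points 0 and 1, with f(z) ∈ ℍ for all z ∈ ℍ, f(0) = 0, f(1) = 1, and f not constant. Then f'(0) and f'(1) are positive real numbers and f'(0)·f'(1) ≥ 1. -/

import Mathlib

open Complex Metric Set Filter Topology ComplexConjugate

private lemma hp_open : IsOpen {z : ℂ | 0 < z.im} := isOpen_lt continuous_const Complex.continuous_im

private lemma normSq_lt_conj {ζ p : ℂ} (hζ : 0 < ζ.im) (hp : 0 < p.im) :
    normSq (ζ - p) < normSq (ζ - conj p) := by
  simp only [Complex.normSq_apply, Complex.sub_re, Complex.sub_im, Complex.conj_re,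
    Complex.conj_im]
  nlinarith

private lemma sub_conj_ne {ζ p : ℂ} (hζ : 0 ≤ ζ.im) (hp : 0 < p.im) : ζ - conj p ≠ 0 := by
  intro h
  have : (ζ - conj p).im = 0 := by rw [h]; simp
  simp [Complex.sub_im, Complex.conj_im] at this
  linarith

private lemma abs_cayley_lt_one {ζ p : ℂ} (hζ : 0 < ζ.im) (hp : 0 < p.im) :
    ‖(ζ - p) / (ζ - conj p)‖ < 1 := by
  rw [norm_div, div_lt_one (by
    have := sub_conj_ne hζ.le hp
    simpa [norm_pos_iff] using this)]
  rw [Complex.norm_def, Complex.norm_def]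
  exact Real.sqrt_lt_sqrt (normSq_nonneg _) (normSq_lt_conj hζ hp)

/-- Schwarz–Pick inequality on the upper half-plane. -/
private lemma schwarz_pick {f : ℂ → ℂ} (hf : DifferentiableOn ℂ f {z : ℂ | 0 < z.im})
    (hmap : ∀ z : ℂ, 0 < z.im → 0 < (f z).im) {w z : ℂ} (hw : 0 < w.im) (hz : 0 < z.im) :
    ‖(f z - f w) / (f z - conj (f w))‖ ≤ ‖(z - w) / (z - conj w)‖ := by
  set m : ℂ → ℂ := fun u => (w - conj w * u) / (1 - u) with hm_def
  have hwconj : w - conj w ≠ 0 := by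
    intro h
    have : (w - conj w).im = 0 := by rw [h]; simp
    simp [Complex.sub_im, Complex.conj_im] at this
    linarith
  have hm_mem : ∀ u ∈ ball (0 : ℂ) 1, 0 < (m u).im := by
    intro u hu
    have hu1 : normSq u < 1 := by
      rw [mem_ball_zero_iff] at hu
      have hu' : ‖u‖ < 1 := hu
      have : ‖u‖ ^ 2 < 1 ^ 2 := by nlinarith [norm_nonneg u]
      simpa [Complex.sq_norm] using this
    have hune : (1 : ℂ) - u ≠ 0 := by
      intro h
      have : u = 1 := by linear_combination -h
      simp [this, Complex.normSq_one] at hu1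
    have hN : 0 < normSq (1 - u) := normSq_pos.2 hune
    simp only [hm_def, Complex.div_im]
    rw [div_sub_div_same]
    apply div_pos _ hN
    simp only [Complex.sub_re, Complex.sub_im, Complex.mul_re, Complex.mul_im,
      Complex.conj_re, Complex.conj_im, Complex.one_re, Complex.one_im,
      Complex.normSq_apply] at *
    nlinarith
  have hm0 : m 0 = w := by simp [hm_def]
  set F : ℂ → ℂ := fun u => (f (m u) - f w) / (f (m u) - conj (f w)) with hF_def
  have hfw : 0 < (f w).im := hmap w hw
  have hFmaps : MapsTo F (ball (0 : ℂ) 1) (ball (0 : ℂ) 1) := by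
    intro u hu
    rw [mem_ball_zero_iff]
    exact abs_cayley_lt_one (hmap _ (hm_mem u hu)) hfw
  have hFdiff : DifferentiableOn ℂ F (ball (0 : ℂ) 1) := by
    intro u hu
    have hune : (1 : ℂ) - u ≠ 0 := by
      intro h
      have hu1 : ‖u‖ < 1 := mem_ball_zero_iff.1 hu
      have : u = 1 := by linear_combination -h
      simp [this] at hu1
    have hmdiff : DifferentiableAt ℂ m u :=
      DifferentiableAt.div (by fun_prop) (by fun_prop) hune
    have hfd : DifferentiableAt ℂ f (m u) :=
      (hf (m u) (hm_mem u hu)).differentiableAt (hp_open.mem_nhds (hm_mem u hu))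
    have hcomp : DifferentiableAt ℂ (fun v => f (m v)) u := hfd.comp u hmdiff
    have hden : f (m u) - conj (f w) ≠ 0 := sub_conj_ne (hmap _ (hm_mem u hu)).le hfw
    exact ((hcomp.sub_const _).div (hcomp.sub_const _) hden).differentiableWithinAt
  have hF0 : F 0 = 0 := by simp [hF_def, hm0]
  set u₀ : ℂ := (z - w) / (z - conj w) with hu₀_def
  have hu₀ : ‖u₀‖ < 1 := abs_cayley_lt_one hz hw
  have hmu₀ : m u₀ = z := by
    have hden : z - conj w ≠ 0 := sub_conj_ne hz.le hw
    have h1u : (1 : ℂ) - u₀ = (w - conj w) / (z - conj w) := by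
      rw [hu₀_def]; field_simp; ring
    rw [hm_def]
    simp only
    rw [h1u, hu₀_def]
    field_simp
    ring
  have := Complex.norm_le_norm_of_mapsTo_ball hFdiff (hFmaps.mono_right ball_subset_closedBall) hF0 hu₀
  rw [hF_def] at this
  simp only [hmu₀] at this
  exact this

private lemma im_nonneg_on_real {U : Set ℂ} (hU : IsOpen U) {f : ℂ → ℂ}
    (hf : DifferentiableOn ℂ f U) (hmap : ∀ z : ℂ, 0 < z.im → 0 < (f z).im)
    {x : ℝ} (hx : (x : ℂ) ∈ U) : 0 ≤ (f x).im := by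
  have hc : ContinuousAt f x := ((hf _ hx).differentiableAt (hU.mem_nhds hx)).continuousAt
  have ht : Tendsto (fun t : ℝ => ((x : ℂ) + t * I)) (𝓝[>] (0 : ℝ)) (𝓝 (x : ℂ)) := by
    have h1 : Tendsto (fun t : ℝ => ((x : ℂ) + t * I)) (𝓝 (0 : ℝ)) (𝓝 ((x : ℂ) + (0:ℝ) * I)) :=
      (continuous_const.add (Complex.continuous_ofReal.mul continuous_const)).tendsto 0
    simp only [Complex.ofReal_zero, zero_mul, add_zero] at h1
    exact h1.mono_left nhdsWithin_le_nhds
  have h2 : Tendsto (fun t : ℝ => (f ((x : ℂ) + t * I)).im) (𝓝[>] (0 : ℝ)) (𝓝 (f x).im) :=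
    (Complex.continuous_im.tendsto _).comp (hc.tendsto.comp ht)
  refine ge_of_tendsto h2 ?_
  filter_upwards [self_mem_nhdsWithin] with t ht
  have : 0 < ((x : ℂ) + t * I).im := by
    simpa [Complex.add_im, Complex.ofReal_im, Complex.mul_im] using ht
  exact (hmap _ this).le

private lemma hasDerivAt_real_slice {U : Set ℂ} (hU : IsOpen U) {f : ℂ → ℂ}
    (hf : DifferentiableOn ℂ f U) {r : ℝ} (hrU : (r : ℂ) ∈ U) :
    HasDerivAt (fun t : ℝ => (f ((r : ℂ) + t)).im) (deriv f r).im 0 := by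
  have hda : HasDerivAt f (deriv f r) r := ((hf _ hrU).differentiableAt (hU.mem_nhds hrU)).hasDerivAt
  have hinner : HasDerivAt (fun t : ℝ => (r : ℂ) + (t : ℂ)) 1 0 := by
    have h0 : HasDerivAt (fun t : ℝ => ((t : ℝ) : ℂ)) (Complex.ofRealCLM 1) 0 :=
      Complex.ofRealCLM.hasDerivAt
    simpa using h0.const_add (r : ℂ)
  have hda' : HasDerivAt f (deriv f r) ((fun t : ℝ => (r : ℂ) + (t : ℂ)) 0) := by simpa using hda
  have hcomp : HasDerivAt (fun t : ℝ => f ((r : ℂ) + (t : ℂ))) (deriv f r) 0 := by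
    have := hda'.scomp (0 : ℝ) hinner
    simpa [Function.comp_def] using this
  have := Complex.imCLM.hasFDerivAt.comp_hasDerivAt (0:ℝ) hcomp
  simpa [Function.comp_def] using this

private lemma deriv_im_eq_zero {U : Set ℂ} (hU : IsOpen U) {f : ℂ → ℂ}
    (hf : DifferentiableOn ℂ f U) (hmap : ∀ z : ℂ, 0 < z.im → 0 < (f z).im)
    {r : ℝ} (hrU : (r : ℂ) ∈ U) (hfr : f r = r) :
    (deriv f r).im = 0 := by
  obtain ⟨δ, δpos, hball⟩ := Metric.isOpen_iff.mp hU _ hrU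
  have hgnn : ∀ t : ℝ, |t| < δ → 0 ≤ (f ((r : ℂ) + t)).im := by
    intro t ht
    have hmem : ((r : ℂ) + t) ∈ U := by
      apply hball
      simp only [Metric.mem_ball, Complex.dist_eq, add_sub_cancel_left]
      simpa [Complex.norm_real] using ht
    have hmem' : ((r + t : ℝ) : ℂ) ∈ U := by push_cast; exact hmem
    have h := im_nonneg_on_real hU hf hmap hmem'
    simpa [Complex.ofReal_add] using h
  have hslope := hasDerivAt_iff_tendsto_slope.mp (hasDerivAt_real_slice hU hf hrU)
  have hsub_pos : (𝓝[>] (0:ℝ)) ≤ 𝓝[≠] (0:ℝ) := nhdsWithin_mono _ (fun y hy => ne_of_gt hy)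
  have hsub_neg : (𝓝[<] (0:ℝ)) ≤ 𝓝[≠] (0:ℝ) := nhdsWithin_mono _ (fun y hy => ne_of_lt hy)
  have h1 : 0 ≤ (deriv f r).im := by
    refine ge_of_tendsto (hslope.mono_left hsub_pos) ?_
    filter_upwards [Ioo_mem_nhdsGT_of_mem ⟨le_refl (0:ℝ), δpos⟩] with t ht
    have hgt : 0 ≤ (f ((r : ℂ) + t)).im := hgnn t (by rw [abs_of_pos ht.1]; exact ht.2)
    rw [slope_def_field]
    simp only [Complex.ofReal_zero, add_zero, hfr, Complex.ofReal_im, sub_zero]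
    exact div_nonneg hgt ht.1.le
  have h2 : (deriv f r).im ≤ 0 := by
    refine le_of_tendsto (hslope.mono_left hsub_neg) ?_
    filter_upwards [Ioo_mem_nhdsLT_of_mem ⟨neg_lt_zero.mpr δpos, le_refl (0:ℝ)⟩] with t ht
    have hgt : 0 ≤ (f ((r : ℂ) + t)).im := hgnn t (by rw [abs_of_neg ht.2]; linarith [ht.1])
    rw [slope_def_field]
    simp only [Complex.ofReal_zero, add_zero, hfr, Complex.ofReal_im, sub_zero]
    exact div_nonpos_iff.mpr (Or.inl ⟨hgt, ht.2.le⟩)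
  linarith

private lemma ne_of_im_ne {z : ℂ} (h : z.im ≠ 0) : z ≠ 0 := fun h0 => h (by rw [h0]; rfl)

private lemma normSq_real_sub_conj (r : ℝ) (p : ℂ) :
    normSq ((r : ℂ) - conj p) = normSq ((r : ℂ) - p) := by
  simp only [Complex.normSq_apply, Complex.sub_re, Complex.sub_im, Complex.conj_re,
    Complex.conj_im, Complex.ofReal_re, Complex.ofReal_im]
  ring

private lemma key0 (a s c A1 A2 B1 B2 : ℂ) (h1 : A1 ≠ 0) (h2 : A2 ≠ 0) (h3 : B1 ≠ 0)
    (h4 : B2 ≠ 0) :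
    (A2 / A1 * (B1 / B2)) * (a * s / (A2 * A2) * (B2 / B1) + A1 / A2 * (c / (B1 * B1)))
      * (A1 * A2) * (B1 * B2) = a * s * (B1 * B2) + c * (A1 * A2) := by
  rw [mul_add, add_mul, add_mul]
  congr 1
  · field_simp
  · field_simp

private lemma key_identity (a p w R : ℂ) (hrp : R - p ≠ 0) (hrq : R - conj p ≠ 0)
    (hrw : R - w ≠ 0) (hrW : R - conj w ≠ 0) (hR : conj R = R) :
    conj ((R - p) / (R - conj p) * ((R - conj w) / (R - w))) *
      (a * (p - conj p) / ((R - conj p) * (R - conj p)) * ((R - conj w) / (R - w))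
        + (R - p) / (R - conj p) * ((conj w - w) / ((R - w) * (R - w))))
      * ((R - p) * (R - conj p)) * ((R - w) * (R - conj w))
    = a * (p - conj p) * ((R - w) * (R - conj w)) - (w - conj w) * ((R - p) * (R - conj p)) := by
  simp only [map_mul, map_div₀, map_sub, Complex.conj_conj, hR]
  rw [key0 a (p - conj p) (conj w - w) (R - p) (R - conj p) (R - w) (R - conj w) hrp hrq hrw hrW]
  ring

private lemma julia {U : Set ℂ} (hU : IsOpen U) (hUH : {z : ℂ | 0 < z.im} ⊆ U)
    {f : ℂ → ℂ} (hf : DifferentiableOn ℂ f U)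
    (hmap : ∀ z : ℂ, 0 < z.im → 0 < (f z).im)
    {r : ℝ} (hrU : (r : ℂ) ∈ U) (hfr : f r = r)
    {w : ℂ} (hw : 0 < w.im) :
    w.im * normSq (f w - r) ≤ (deriv f r).re * (f w).im * normSq (w - r) := by
  set a : ℂ := deriv f r with ha_def
  set p : ℂ := f w with hp_def
  have hp : 0 < p.im := hmap w hw
  set q : ℂ := conj p with hq_def
  have hrp : (r : ℂ) - p ≠ 0 := ne_of_im_ne (by simp [Complex.sub_im]; exact ne_of_gt hp)
  have hrq : (r : ℂ) - q ≠ 0 := ne_of_im_ne (by simp [Complex.sub_im, hq_def]; positivity)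
  have hrw : (r : ℂ) - w ≠ 0 := ne_of_im_ne (by simp [Complex.sub_im]; exact ne_of_gt hw)
  have hrW : (r : ℂ) - conj w ≠ 0 := ne_of_im_ne (by simp [Complex.sub_im]; positivity)
  have hda : HasDerivAt f a r := ((hf _ hrU).differentiableAt (hU.mem_nhds hrU)).hasDerivAt
  set dA : ℂ := (a * ((r : ℂ) - q) - ((r : ℂ) - p) * a) / ((r : ℂ) - q) ^ 2 with hdA_def
  set dB : ℂ := (1 * ((r : ℂ) - w) - ((r : ℂ) - conj w) * 1) / ((r : ℂ) - w) ^ 2 with hdB_def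
  have hA : HasDerivAt (fun z => (f z - p) / (f z - q)) dA r := by
    have h0 := (hda.sub_const p).div (hda.sub_const q) (by rw [hfr]; exact hrq)
    rw [hfr] at h0
    exact h0
  have hB : HasDerivAt (fun z : ℂ => (z - conj w) / (z - w)) dB ((r : ℂ)) :=
    ((hasDerivAt_id ((r : ℂ))).sub_const (conj w)).div ((hasDerivAt_id _).sub_const w) hrw
  set g : ℂ → ℂ := fun z => ((f z - p) / (f z - q)) * ((z - conj w) / (z - w)) with hg_def
  have hgr : g ((r : ℂ)) = (((r:ℂ) - p) / ((r:ℂ) - q)) * (((r:ℂ) - conj w) / ((r:ℂ) - w)) := by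
    rw [hg_def]; simp only; rw [hfr]
  set G : ℂ := dA * (((r:ℂ) - conj w) / ((r:ℂ) - w)) + (((r:ℂ) - p) / ((r:ℂ) - q)) * dB
    with hG_def
  have hg : HasDerivAt g G ((r : ℂ)) := by
    have h0 := hA.mul hB
    refine h0.congr_deriv ?_
    rw [hG_def, hfr]
  -- the vertical slice
  have hinner : HasDerivAt (fun y : ℝ => (r : ℂ) + (y : ℂ) * I) I 0 := by
    have h0 : HasDerivAt (fun t : ℝ => ((t : ℝ) : ℂ)) (Complex.ofRealCLM 1) 0 :=
      Complex.ofRealCLM.hasDerivAt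
    simpa using (h0.mul_const I).const_add (r : ℂ)
  have hg' : HasDerivAt g G ((fun y : ℝ => (r : ℂ) + (y : ℂ) * I) 0) := by simpa using hg
  have hφ : HasDerivAt (fun y : ℝ => g ((r : ℂ) + (y : ℂ) * I)) (I * G) 0 := by
    simpa [Function.comp_def] using hg'.scomp (0 : ℝ) hinner
  have hre : HasDerivAt (fun y : ℝ => (g ((r : ℂ) + (y : ℂ) * I)).re) ((I * G).re) 0 := by
    simpa [Function.comp_def] using Complex.reCLM.hasFDerivAt.comp_hasDerivAt (0 : ℝ) hφ
  have him : HasDerivAt (fun y : ℝ => (g ((r : ℂ) + (y : ℂ) * I)).im) ((I * G).im) 0 := by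
    simpa [Function.comp_def] using Complex.imCLM.hasFDerivAt.comp_hasDerivAt (0 : ℝ) hφ
  set ψ : ℝ → ℝ := fun y => (g ((r : ℂ) + (y : ℂ) * I)).re * (g ((r : ℂ) + (y : ℂ) * I)).re
      + (g ((r : ℂ) + (y : ℂ) * I)).im * (g ((r : ℂ) + (y : ℂ) * I)).im with hψ_def
  have hψ : HasDerivAt ψ (-2 * ((conj (g ((r:ℂ))) * G).im)) 0 := by
    have h0 := (hre.mul hre).add (him.mul him)
    refine h0.congr_deriv ?_
    simp only [Complex.mul_im, Complex.mul_re, Complex.conj_re, Complex.conj_im,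
      Complex.I_re, Complex.I_im, Complex.ofReal_zero, zero_mul, add_zero]
    ring
  -- ψ 0 = 1
  have hK1 : normSq ((r:ℂ) - q) = normSq ((r:ℂ) - p) := normSq_real_sub_conj r p
  have hK2 : normSq ((r:ℂ) - conj w) = normSq ((r:ℂ) - w) := normSq_real_sub_conj r w
  have hψ0 : ψ 0 = 1 := by
    have : ψ 0 = normSq (g ((r:ℂ) + ((0:ℝ):ℂ) * I)) := (Complex.normSq_apply _).symm
    rw [this]
    simp only [Complex.ofReal_zero, zero_mul, add_zero]
    rw [hgr]
    rw [Complex.normSq_mul, Complex.normSq_div, Complex.normSq_div, hK1, hK2]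
    rw [div_self (by simpa using normSq_pos.2 hrp), div_self (by simpa using normSq_pos.2 hrw)]
    norm_num
  -- ψ y ≤ 1 for small positive y
  have hub : ∀ y ∈ Ioo (0:ℝ) w.im, ψ y ≤ ψ 0 := by
    intro y hy
    set z : ℂ := (r : ℂ) + (y : ℂ) * I with hz_def
    have hzim : z.im = y := by simp [hz_def]
    have hz : 0 < z.im := by rw [hzim]; exact hy.1
    have hzw' : z - w ≠ 0 := ne_of_im_ne (by rw [Complex.sub_im, hzim]; exact ne_of_lt (by linarith [hy.2]))
    have hzW : z - conj w ≠ 0 := ne_of_im_ne (by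
      rw [Complex.sub_im, hzim, Complex.conj_im]
      intro h; linarith [hy.1, hw])
    have hsp := schwarz_pick (hf.mono hUH) hmap hw hz
    rw [← hp_def, ← hq_def] at hsp
    have habs : ‖g z‖ ≤ 1 := by
      have e1 : ‖g z‖
          = ‖(f z - p) / (f z - q)‖ * (‖z - conj w‖ / ‖z - w‖) := by
        rw [hg_def]; simp only; rw [norm_mul, norm_div, norm_div]
      rw [e1]
      calc ‖(f z - p) / (f z - q)‖ * (‖z - conj w‖ / ‖z - w‖)
          ≤ (‖z - w‖ / ‖z - conj w‖)
            * (‖z - conj w‖ / ‖z - w‖) := by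
            apply mul_le_mul_of_nonneg_right _
              (div_nonneg (norm_nonneg _) (norm_nonneg _))
            simpa [norm_div] using hsp
        _ = 1 := by
            rw [div_mul_div_comm, mul_comm (‖z - w‖),
              div_self (mul_ne_zero (norm_ne_zero_iff.mpr hzW) (norm_ne_zero_iff.mpr hzw'))]
    have : ψ y = normSq (g z) := Complex.normSq_apply _ |>.symm
    rw [this, hψ0, ← Complex.sq_norm]
    nlinarith [norm_nonneg (g z)]
  -- derivative at the max point is ≤ 0
  have hsub_pos : (𝓝[>] (0:ℝ)) ≤ 𝓝[≠] (0:ℝ) := nhdsWithin_mono _ (fun y hy => ne_of_gt hy)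
  have hDle : -2 * ((conj (g ((r:ℂ))) * G).im) ≤ 0 := by
    have hs := hasDerivAt_iff_tendsto_slope.mp hψ
    refine le_of_tendsto (hs.mono_left hsub_pos) ?_
    filter_upwards [Ioo_mem_nhdsGT_of_mem ⟨le_refl (0:ℝ), hw⟩] with y hy
    rw [slope_def_field]
    rw [sub_zero]
    exact div_nonpos_iff.mpr (Or.inr ⟨sub_nonpos.2 (hub y hy), hy.1.le⟩)
  have hIm : 0 ≤ (conj (g ((r:ℂ))) * G).im := by linarith
  -- main algebraic identity
  have hrq' : (r:ℂ) - conj p ≠ 0 := by rw [← hq_def]; exact hrq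
  have hgr' : g ((r:ℂ)) = (((r:ℂ) - p) / ((r:ℂ) - conj p)) * (((r:ℂ) - conj w) / ((r:ℂ) - w)) := by
    rw [hgr, hq_def]
  have hdA' : dA = a * (p - conj p) / (((r:ℂ) - conj p) * ((r:ℂ) - conj p)) := by
    rw [hdA_def, hq_def]; ring
  have hdB' : dB = (conj w - w) / (((r:ℂ) - w) * ((r:ℂ) - w)) := by rw [hdB_def]; ring
  have hG' : G = a * (p - conj p) / (((r:ℂ) - conj p) * ((r:ℂ) - conj p))
      * (((r:ℂ) - conj w) / ((r:ℂ) - w))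
      + ((r:ℂ) - p) / ((r:ℂ) - conj p)
      * ((conj w - w) / (((r:ℂ) - w) * ((r:ℂ) - w))) := by
    rw [hG_def, hdA', hdB', hq_def]
  have key : conj (g ((r:ℂ))) * G * (((r:ℂ) - p) * ((r:ℂ) - conj p))
      * (((r:ℂ) - w) * ((r:ℂ) - conj w))
      = a * (p - conj p) * (((r:ℂ) - w) * ((r:ℂ) - conj w))
        - (w - conj w) * (((r:ℂ) - p) * ((r:ℂ) - conj p)) := by
    rw [hgr', hG']
    exact key_identity a p w _ hrp hrq' hrw hrW (Complex.conj_ofReal r)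
  have hK1c : ((r:ℂ) - p) * ((r:ℂ) - conj p) = ((normSq ((r:ℂ) - p) : ℝ) : ℂ) := by
    rw [← Complex.mul_conj]
    simp [map_sub, Complex.conj_ofReal]
  have hK2c : ((r:ℂ) - w) * ((r:ℂ) - conj w) = ((normSq ((r:ℂ) - w) : ℝ) : ℂ) := by
    rw [← Complex.mul_conj]
    simp [map_sub, Complex.conj_ofReal]
  rw [hK1c, hK2c, Complex.sub_conj p, Complex.sub_conj w] at key
  have him2 := congrArg Complex.im key
  simp only [Complex.mul_im, Complex.mul_re, Complex.ofReal_re, Complex.ofReal_im,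
    Complex.I_re, Complex.I_im, mul_zero, zero_mul, mul_one, sub_zero, zero_sub,
    add_zero, zero_add, Complex.sub_im, Complex.sub_re] at him2
  have hIm' : 0 ≤ ((starRingEnd ℂ) (g ((r:ℂ)))).re * G.im + ((starRingEnd ℂ) (g ((r:ℂ)))).im * G.re := by
    simpa [Complex.mul_im] using hIm
  have hK1pos : 0 < normSq ((r:ℂ) - p) := normSq_pos.2 hrp
  have hK2pos : 0 < normSq ((r:ℂ) - w) := normSq_pos.2 hrw
  have e1 : normSq (p - (r:ℂ)) = normSq ((r:ℂ) - p) := by rw [← Complex.normSq_neg, neg_sub]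
  have e2 : normSq (w - (r:ℂ)) = normSq ((r:ℂ) - w) := by rw [← Complex.normSq_neg, neg_sub]
  rw [e1, e2]
  nlinarith [him2, mul_nonneg (mul_nonneg hIm' hK1pos.le) hK2pos.le]


private lemma cs_ineq (p : ℂ) : p.im ^ 2 ≤ Complex.normSq p * Complex.normSq (p - 1) := by
  simp only [Complex.normSq_apply, Complex.sub_re, Complex.sub_im, Complex.one_re,
    Complex.one_im]
  nlinarith [sq_nonneg (p.re * p.re - p.re + p.im * p.im)]

/-- For a nonconstant holomorphic self-map of the half-plane with boundary fixed
points `0` and `1`, the product of the derivatives there is at least `1`. -/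
theorem product_of_boundary_derivatives_ge_one
    (U : Set ℂ) (hU : IsOpen U) (hUH : {z : ℂ | 0 < z.im} ⊆ U)
    (h0U : (0 : ℂ) ∈ U) (h1U : (1 : ℂ) ∈ U)
    (f : ℂ → ℂ) (hf : DifferentiableOn ℂ f U)
    (hmap : ∀ z : ℂ, 0 < z.im → 0 < (f z).im)
    (hfix0 : f 0 = 0) (hfix1 : f 1 = 1)
    (hnc : ¬ ∃ w : ℂ, ∀ z : ℂ, 0 < z.im → f z = w) :
    ((deriv f 0).im = 0 ∧ 0 < (deriv f 0).re) ∧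
      ((deriv f 1).im = 0 ∧ 0 < (deriv f 1).re) ∧
      (deriv f 0).re * (deriv f 1).re ≥ 1 := by
  have h0U' : ((0 : ℝ) : ℂ) ∈ U := by simpa using h0U
  have h1U' : ((1 : ℝ) : ℂ) ∈ U := by simpa using h1U
  have hf0 : f ((0 : ℝ) : ℂ) = ((0 : ℝ) : ℂ) := by simpa using hfix0
  have hf1 : f ((1 : ℝ) : ℂ) = ((1 : ℝ) : ℂ) := by simpa using hfix1
  have him0 : (deriv f 0).im = 0 := by
    simpa using deriv_im_eq_zero hU hf hmap h0U' hf0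
  have him1 : (deriv f 1).im = 0 := by
    simpa using deriv_im_eq_zero hU hf hmap h1U' hf1
  set w₀ : ℂ := (1 / 2 : ℂ) + (1 / 2 : ℂ) * I with hw₀_def
  have hw₀ : 0 < w₀.im := by simp [hw₀_def]
  set p : ℂ := f w₀ with hp_def
  have hp : 0 < p.im := hmap w₀ hw₀
  have hj0 := julia hU hUH hf hmap h0U' hf0 hw₀
  have hj1 := julia hU hUH hf hmap h1U' hf1 hw₀
  rw [← hp_def] at hj0 hj1
  simp only [Complex.ofReal_zero, Complex.ofReal_one, sub_zero] at hj0 hj1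
  have hw₀im : w₀.im = 1 / 2 := by simp [hw₀_def]
  have hns0 : Complex.normSq w₀ = 1 / 2 := by
    simp [hw₀_def, Complex.normSq_apply]; norm_num
  have hns1 : Complex.normSq (w₀ - 1) = 1 / 2 := by
    simp [hw₀_def, Complex.normSq_apply, Complex.sub_re, Complex.sub_im]; norm_num
  rw [hw₀im, hns0] at hj0
  rw [hw₀im, hns1] at hj1
  -- hj0 : 1/2 * normSq p ≤ (deriv f 0).re * p.im * (1/2)
  -- hj1 : 1/2 * normSq (p - 1) ≤ (deriv f 1).re * p.im * (1/2)
  have hnsp : 0 < Complex.normSq p := Complex.normSq_pos.2 (ne_of_im_ne (ne_of_gt hp))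
  have hnsp1 : 0 < Complex.normSq (p - 1) := Complex.normSq_pos.2 (ne_of_im_ne (by
    rw [Complex.sub_im, Complex.one_im, sub_zero]; exact ne_of_gt hp))
  have h0pos : 0 < (deriv f 0).re := by nlinarith
  have h1pos : 0 < (deriv f 1).re := by nlinarith
  refine ⟨⟨him0, h0pos⟩, ⟨him1, h1pos⟩, ?_⟩
  have hcs := cs_ineq p
  have hA : Complex.normSq p ≤ (deriv f 0).re * p.im := by nlinarith
  have hB : Complex.normSq (p - 1) ≤ (deriv f 1).re * p.im := by nlinarith
  have h12 : Complex.normSq p * Complex.normSq (p - 1)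
      ≤ ((deriv f 0).re * p.im) * ((deriv f 1).re * p.im) :=
    mul_le_mul hA hB (Complex.normSq_nonneg _) (le_trans (Complex.normSq_nonneg _) hA)
  have : p.im ^ 2 ≤ (deriv f 0).re * (deriv f 1).re * p.im ^ 2 := by nlinarith
  nlinarith [this, pow_pos hp 2]
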